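/- Let Rot = [[0,1],[−1,0]], so that Rot·Λ is the set of holonomy vectors of saddle connections of the rotated surface 𝓛^R. For every (a,b) ∈ Ω₂, i.e. 0 < a ≤ 1 and 1 − a < b ≤ 1, the set {w₂/w₁ : w = M_{a,b}·Rot·u for some u ∈ Λ, 0 < w₁ ≤ 1, w₂ > 0} has a least element, and this least element equals 1/(ab). (This is the return time of the horocycle flow on the part Ω₂ of the Poincaré section.) -/

import Mathlib

open Real Matrix MeasureTheory Filter Set

noncomputable section

abbrev SL2 := Matrix.SpecialLinearGroup (Fin 2) ℝ

/-- The elliptic generator R of the Veech group of 𝓛. -/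
def Rgen : SL2 := ⟨!![1 + Real.sqrt 2, -(2 + Real.sqrt 2); 1, -1], by
  rw [Matrix.det_fin_two_of]; ring⟩

/-- The parabolic generator S of the Veech group of 𝓛. -/
def Sgen : SL2 := ⟨!![1, 2 + Real.sqrt 2; 0, 1], by
  rw [Matrix.det_fin_two_of]; ring⟩

/-- The Veech group Γ of the translation surface 𝓛. -/
def Γ : Subgroup SL2 := Subgroup.closure {Rgen, Sgen}

/-- Linear action of a 2×2 matrix on ℝ². -/
def act (g : Matrix (Fin 2) (Fin 2) ℝ) (v : ℝ × ℝ) : ℝ × ℝ :=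
  (g 0 0 * v.1 + g 0 1 * v.2, g 1 0 * v.1 + g 1 1 * v.2)

/-- The set of holonomy vectors of saddle connections of 𝓛. -/
def Lambda : Set (ℝ × ℝ) :=
  {v | ∃ γ ∈ Γ, v = act (γ : Matrix (Fin 2) (Fin 2) ℝ) (1, 0)} ∪
  {v | ∃ γ ∈ Γ, v = act (γ : Matrix (Fin 2) (Fin 2) ℝ) (1 + Real.sqrt 2, 0)} ∪
  {v | ∃ γ ∈ Γ, v = act (γ : Matrix (Fin 2) (Fin 2) ℝ) (0, 1)} ∪
  {v | ∃ γ ∈ Γ, v = act (γ : Matrix (Fin 2) (Fin 2) ℝ) (0, Real.sqrt 2)}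

/-- The matrix M_{a,b} = [[a,b],[0,a⁻¹]]. -/
def Mmat (a b : ℝ) : Matrix (Fin 2) (Fin 2) ℝ := !![a, b; 0, a⁻¹]

/-- The rotation by π/2 in the clockwise direction; Rot·Λ is the set of holonomy vectors of the
rotated surface 𝓛^R. -/
def Rot : Matrix (Fin 2) (Fin 2) ℝ := !![0, 1; -1, 0]

/-! ### Preliminaries on √2 -/

lemma sq2_sq : Real.sqrt 2 * Real.sqrt 2 = 2 := Real.mul_self_sqrt (by norm_num)

lemma sq2_gt : 1 < Real.sqrt 2 := by
  nlinarith [sq2_sq, Real.sqrt_nonneg 2]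

lemma sq2_lt : Real.sqrt 2 < 3/2 := by
  nlinarith [sq2_sq, Real.sqrt_nonneg 2]

lemma sq2_pos : 0 < Real.sqrt 2 := by linarith [sq2_gt]

/-! ### The four elementary maps -/

def aR (v : ℝ × ℝ) : ℝ × ℝ :=
  ((1 + Real.sqrt 2) * v.1 - (2 + Real.sqrt 2) * v.2, v.1 - v.2)

def aRi (v : ℝ × ℝ) : ℝ × ℝ :=
  (-v.1 + (2 + Real.sqrt 2) * v.2, -v.1 + (1 + Real.sqrt 2) * v.2)

def aS (v : ℝ × ℝ) : ℝ × ℝ := (v.1 + (2 + Real.sqrt 2) * v.2, v.2)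

def aSi (v : ℝ × ℝ) : ℝ × ℝ := (v.1 - (2 + Real.sqrt 2) * v.2, v.2)

lemma aR_neg (v : ℝ × ℝ) : aR (-v) = -(aR v) := by
  simp only [aR, Prod.ext_iff, Prod.fst_neg, Prod.snd_neg]; constructor <;> ring

lemma aS_neg (v : ℝ × ℝ) : aS (-v) = -(aS v) := by
  simp only [aS, Prod.ext_iff, Prod.fst_neg, Prod.snd_neg]; exact ⟨by ring, trivial⟩

lemma aSi_neg (v : ℝ × ℝ) : aSi (-v) = -(aSi v) := by
  simp only [aSi, Prod.ext_iff, Prod.fst_neg, Prod.snd_neg]; exact ⟨by ring, trivial⟩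

lemma aR_aR (v : ℝ × ℝ) :
    aR (aR v) = ((1 + Real.sqrt 2) * v.1 - (2 + 2*Real.sqrt 2) * v.2,
      Real.sqrt 2 * v.1 - (1 + Real.sqrt 2) * v.2) := by
  simp only [aR, Prod.ext_iff]
  constructor
  · linear_combination (v.1 - v.2) * sq2_sq
  · ring

lemma aR4 (v : ℝ × ℝ) : aR (aR (aR (aR v))) = -v := by
  rw [aR_aR, aR_aR]
  simp only [Prod.ext_iff, Prod.fst_neg, Prod.snd_neg]
  constructor
  · linear_combination (-v.1) * sq2_sq
  · linear_combination (-v.2) * sq2_sq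

lemma aRi_eq (v : ℝ × ℝ) : aRi v = -(aR (aR (aR v))) := by
  rw [aR_aR]
  simp only [aR, aRi, Prod.ext_iff, Prod.fst_neg, Prod.snd_neg]
  constructor
  · linear_combination (v.1 - v.2) * sq2_sq
  · linear_combination (v.1 - v.2) * sq2_sq

lemma aRi_aR (v : ℝ × ℝ) : aRi (aR v) = v := by
  simp only [aR, aRi, Prod.ext_iff]
  constructor <;> ring

lemma aR_aRi (v : ℝ × ℝ) : aR (aRi v) = v := by
  simp only [aR, aRi, Prod.ext_iff]
  constructor <;> ring

lemma aS_aSi (v : ℝ × ℝ) : aS (aSi v) = v := by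
  simp only [aS, aSi, Prod.ext_iff]; exact ⟨by ring, trivial⟩

lemma aSi_aS (v : ℝ × ℝ) : aSi (aS v) = v := by
  simp only [aS, aSi, Prod.ext_iff]; exact ⟨by ring, trivial⟩

/-! ### Reachable vectors, with normal-form states -/

inductive Reach : ℝ × ℝ → ℕ → Prop
  | base1 : Reach (1, 0) 0
  | base2 : Reach (1 + Real.sqrt 2, 0) 0
  | base3 : Reach (0, 1) 0
  | base4 : Reach (0, Real.sqrt 2) 0
  | neg {u s} : Reach u s → Reach (-u) s
  | rstep {u s} : Reach u s → (s = 0 ∨ s = 4 ∨ s = 5) → Reach (aR u) 1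
  | rstep2 {u} : Reach u 1 → Reach (aR u) 2
  | rstep3 {u} : Reach u 2 → Reach (aR u) 3
  | sstep {u s} : Reach u s → s ≤ 3 → Reach (aS u) 4
  | sstepext {u} : Reach u 4 → Reach (aS u) 4
  | tstep {u s} : Reach u s → s ≤ 3 → Reach (aSi u) 5
  | tstepext {u} : Reach u 5 → Reach (aSi u) 5

lemma reach_inv1 {u s} (h : Reach u s) (hs : s = 1) :
    ∃ w t, Reach w t ∧ (t = 0 ∨ t = 4 ∨ t = 5) ∧ (u = aR w ∨ u = -aR w) := by
  induction h with
  | base1 => omega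
  | base2 => omega
  | base3 => omega
  | base4 => omega
  | neg h ih =>
    obtain ⟨w, t, hw, ht, hc⟩ := ih hs
    rcases hc with hc | hc
    · exact ⟨w, t, hw, ht, Or.inr (by rw [hc])⟩
    · exact ⟨w, t, hw, ht, Or.inl (by rw [hc, neg_neg])⟩
  | rstep h ht _ => exact ⟨_, _, h, ht, Or.inl rfl⟩
  | rstep2 h _ => omega
  | rstep3 h _ => omega
  | sstep h ht _ => omega
  | sstepext h _ => omega
  | tstep h ht _ => omega
  | tstepext h _ => omega

lemma reach_inv2 {u s} (h : Reach u s) (hs : s = 2) :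
    ∃ w, Reach w 1 ∧ (u = aR w ∨ u = -aR w) := by
  induction h with
  | base1 => omega
  | base2 => omega
  | base3 => omega
  | base4 => omega
  | neg h ih =>
    obtain ⟨w, hw, hc⟩ := ih hs
    rcases hc with hc | hc
    · exact ⟨w, hw, Or.inr (by rw [hc])⟩
    · exact ⟨w, hw, Or.inl (by rw [hc, neg_neg])⟩
  | rstep h ht _ => omega
  | rstep2 h _ => exact ⟨_, h, Or.inl rfl⟩
  | rstep3 h _ => omega
  | sstep h ht _ => omega
  | sstepext h _ => omega
  | tstep h ht _ => omega
  | tstepext h _ => omega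

lemma reach_inv3 {u s} (h : Reach u s) (hs : s = 3) :
    ∃ w, Reach w 2 ∧ (u = aR w ∨ u = -aR w) := by
  induction h with
  | base1 => omega
  | base2 => omega
  | base3 => omega
  | base4 => omega
  | neg h ih =>
    obtain ⟨w, hw, hc⟩ := ih hs
    rcases hc with hc | hc
    · exact ⟨w, hw, Or.inr (by rw [hc])⟩
    · exact ⟨w, hw, Or.inl (by rw [hc, neg_neg])⟩
  | rstep h ht _ => omega
  | rstep2 h _ => omega
  | rstep3 h _ => exact ⟨_, h, Or.inl rfl⟩
  | sstep h ht _ => omega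
  | sstepext h _ => omega
  | tstep h ht _ => omega
  | tstepext h _ => omega

lemma reach_inv4 {u s} (h : Reach u s) (hs : s = 4) :
    ∃ w t, Reach w t ∧ (t ≤ 4) ∧ (u = aS w ∨ u = -aS w) := by
  induction h with
  | base1 => omega
  | base2 => omega
  | base3 => omega
  | base4 => omega
  | neg h ih =>
    obtain ⟨w, t, hw, ht, hc⟩ := ih hs
    rcases hc with hc | hc
    · exact ⟨w, t, hw, ht, Or.inr (by rw [hc])⟩
    · exact ⟨w, t, hw, ht, Or.inl (by rw [hc, neg_neg])⟩
  | rstep h ht _ => omega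
  | rstep2 h _ => omega
  | rstep3 h _ => omega
  | sstep h ht _ => exact ⟨_, _, h, by omega, Or.inl rfl⟩
  | sstepext h _ => exact ⟨_, _, h, by omega, Or.inl rfl⟩
  | tstep h ht _ => omega
  | tstepext h _ => omega

lemma reach_inv5 {u s} (h : Reach u s) (hs : s = 5) :
    ∃ w t, Reach w t ∧ (t ≤ 3 ∨ t = 5) ∧ (u = aSi w ∨ u = -aSi w) := by
  induction h with
  | base1 => omega
  | base2 => omega
  | base3 => omega
  | base4 => omega
  | neg h ih =>
    obtain ⟨w, t, hw, ht, hc⟩ := ih hs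
    rcases hc with hc | hc
    · exact ⟨w, t, hw, ht, Or.inr (by rw [hc])⟩
    · exact ⟨w, t, hw, ht, Or.inl (by rw [hc, neg_neg])⟩
  | rstep h ht _ => omega
  | rstep2 h _ => omega
  | rstep3 h _ => omega
  | sstep h ht _ => omega
  | sstepext h _ => omega
  | tstep h ht _ => exact ⟨_, _, h, Or.inl ht, Or.inl rfl⟩
  | tstepext h _ => exact ⟨_, _, h, Or.inr rfl, Or.inl rfl⟩

lemma reach_le5 {u s} (h : Reach u s) : s ≤ 5 := by
  induction h <;> omega

/-- Closure of reachability under left multiplication by R. -/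
lemma reach_R {u s} (h : Reach u s) : ∃ t, Reach (aR u) t := by
  have h5 := reach_le5 h
  interval_cases s
  · exact ⟨1, Reach.rstep h (by omega)⟩
  · exact ⟨2, Reach.rstep2 h⟩
  · exact ⟨3, Reach.rstep3 h⟩
  · -- s = 3 : unwind three R-steps
    obtain ⟨w2, hw2, hc3⟩ := reach_inv3 h rfl
    obtain ⟨w1, hw1, hc2⟩ := reach_inv2 hw2 rfl
    obtain ⟨w0, t, hw0, ht, hc1⟩ := reach_inv1 hw1 rfl
    have key : aR u = w0 ∨ aR u = -w0 := by
      rcases hc3 with h3 | h3 <;> rcases hc2 with h2 | h2 <;> rcases hc1 with h1 | h1 <;>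
        rw [h3, h2, h1] <;>
        simp only [aR_neg, neg_neg, aR4] <;> simp
    rcases key with hk | hk
    · exact ⟨t, hk ▸ hw0⟩
    · exact ⟨t, hk ▸ Reach.neg hw0⟩
  · exact ⟨1, Reach.rstep h (by omega)⟩
  · exact ⟨1, Reach.rstep h (by omega)⟩

/-- Closure of reachability under left multiplication by R⁻¹. -/
lemma reach_Ri {u s} (h : Reach u s) : ∃ t, Reach (aRi u) t := by
  have h5 := reach_le5 h
  have build : (s = 0 ∨ s = 4 ∨ s = 5) → ∃ t, Reach (aRi u) t := by
    intro hs
    refine ⟨3, ?_⟩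
    have h1 : Reach (aR u) 1 := Reach.rstep h hs
    have h3 : Reach (aR (aR (aR u))) 3 := Reach.rstep3 (Reach.rstep2 h1)
    have := Reach.neg h3
    rwa [← aRi_eq] at this
  interval_cases s
  · exact build (by omega)
  · obtain ⟨w, t, hw, ht, hc⟩ := reach_inv1 h rfl
    rcases hc with hc | hc
    · exact ⟨t, by rw [hc, aRi_aR]; exact hw⟩
    · exact ⟨t, by rw [hc, ← aR_neg, aRi_aR]; exact Reach.neg hw⟩
  · obtain ⟨w, hw, hc⟩ := reach_inv2 h rfl
    rcases hc with hc | hc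
    · exact ⟨1, by rw [hc, aRi_aR]; exact hw⟩
    · exact ⟨1, by rw [hc, ← aR_neg, aRi_aR]; exact Reach.neg hw⟩
  · obtain ⟨w, hw, hc⟩ := reach_inv3 h rfl
    rcases hc with hc | hc
    · exact ⟨2, by rw [hc, aRi_aR]; exact hw⟩
    · exact ⟨2, by rw [hc, ← aR_neg, aRi_aR]; exact Reach.neg hw⟩
  · exact build (by omega)
  · exact build (by omega)

/-- Closure of reachability under left multiplication by S. -/
lemma reach_S {u s} (h : Reach u s) : ∃ t, Reach (aS u) t := by
  have h5 := reach_le5 h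
  rcases Nat.lt_or_ge s 4 with h4 | h4
  · exact ⟨4, Reach.sstep h (by omega)⟩
  · interval_cases s
    · exact ⟨4, Reach.sstepext h⟩
    · obtain ⟨w, t, hw, ht, hc⟩ := reach_inv5 h rfl
      rcases hc with hc | hc
      · exact ⟨t, by rw [hc, aS_aSi]; exact hw⟩
      · exact ⟨t, by rw [hc, ← aSi_neg, aS_aSi]; exact Reach.neg hw⟩

/-- Closure of reachability under left multiplication by S⁻¹. -/
lemma reach_Si {u s} (h : Reach u s) : ∃ t, Reach (aSi u) t := by
  have h5 := reach_le5 h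
  rcases Nat.lt_or_ge s 4 with h4 | h4
  · exact ⟨5, Reach.tstep h (by omega)⟩
  · interval_cases s
    · obtain ⟨w, t, hw, ht, hc⟩ := reach_inv4 h rfl
      have ht3 : t ≤ 3 ∨ t = 4 := by omega
      rcases hc with hc | hc
      · exact ⟨t, by rw [hc, aSi_aS]; exact hw⟩
      · exact ⟨t, by rw [hc, ← aS_neg, aSi_aS]; exact Reach.neg hw⟩
    · exact ⟨5, Reach.tstepext h⟩


/-! ### Matrix action lemmas -/

lemma act_mul (A B : Matrix (Fin 2) (Fin 2) ℝ) (v : ℝ × ℝ) :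
    act (A * B) v = act A (act B v) := by
  simp only [act, Matrix.mul_apply, Fin.sum_univ_two, Prod.ext_iff]
  constructor <;> ring

lemma act_one (v : ℝ × ℝ) : act (1 : Matrix (Fin 2) (Fin 2) ℝ) v = v := by
  simp [act, Matrix.one_apply]

def RA (u : ℝ × ℝ) : Prop := ∃ s, Reach u s

/-- The subgroup of SL₂(ℝ) preserving reachability in both directions. -/
def K : Subgroup SL2 where
  carrier := {γ | ∀ u, RA u → RA (act (γ : Matrix (Fin 2) (Fin 2) ℝ) u) ∧
      RA (act ((γ⁻¹ : SL2) : Matrix (Fin 2) (Fin 2) ℝ) u)}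
  one_mem' := by
    intro u hu
    simpa [Matrix.SpecialLinearGroup.coe_one, act_one] using And.intro hu hu
  mul_mem' := by
    intro a b ha hb u hu
    constructor
    · rw [Matrix.SpecialLinearGroup.coe_mul, act_mul]
      exact (ha _ ((hb u hu).1)).1
    · rw [_root_.mul_inv_rev, Matrix.SpecialLinearGroup.coe_mul, act_mul]
      exact (hb _ ((ha u hu).2)).2
  inv_mem' := by
    intro a ha u hu
    refine ⟨(ha u hu).2, ?_⟩
    rw [inv_inv]
    exact (ha u hu).1

lemma act_Rgen (v : ℝ × ℝ) :
    act ((Rgen : SL2) : Matrix (Fin 2) (Fin 2) ℝ) v = aR v := by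
  show act !![1 + Real.sqrt 2, -(2 + Real.sqrt 2); 1, -1] v = aR v
  simp [act, aR, Prod.ext_iff]
  constructor <;> ring

lemma act_Sgen (v : ℝ × ℝ) :
    act ((Sgen : SL2) : Matrix (Fin 2) (Fin 2) ℝ) v = aS v := by
  show act !![1, 2 + Real.sqrt 2; 0, 1] v = aS v
  simp [act, aS, Prod.ext_iff]

lemma act_Rgen_inv (v : ℝ × ℝ) :
    act (((Rgen⁻¹ : SL2) : SL2) : Matrix (Fin 2) (Fin 2) ℝ) v = aRi v := by
  rw [Matrix.SpecialLinearGroup.coe_inv]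
  rw [show ((Rgen : SL2) : Matrix (Fin 2) (Fin 2) ℝ)
      = !![1 + Real.sqrt 2, -(2 + Real.sqrt 2); 1, -1] from rfl]
  rw [Matrix.adjugate_fin_two_of]
  simp [act, aRi, Prod.ext_iff]

lemma act_Sgen_inv (v : ℝ × ℝ) :
    act (((Sgen⁻¹ : SL2) : SL2) : Matrix (Fin 2) (Fin 2) ℝ) v = aSi v := by
  rw [Matrix.SpecialLinearGroup.coe_inv]
  rw [show ((Sgen : SL2) : Matrix (Fin 2) (Fin 2) ℝ)
      = !![1, 2 + Real.sqrt 2; 0, 1] from rfl]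
  rw [Matrix.adjugate_fin_two_of]
  simp [act, aSi, Prod.ext_iff]
  ring

lemma gamma_le_K : Γ ≤ K := by
  rw [Γ, Subgroup.closure_le]
  rintro g hg
  rcases hg with rfl | rfl
  · intro u hu
    obtain ⟨s, hs⟩ := hu
    constructor
    · rw [act_Rgen]; exact reach_R hs
    · rw [act_Rgen_inv]; exact reach_Ri hs
  · intro u hu
    obtain ⟨s, hs⟩ := hu
    constructor
    · rw [act_Sgen]; exact reach_S hs
    · rw [act_Sgen_inv]; exact reach_Si hs

lemma lambda_reach {u : ℝ × ℝ} (hu : u ∈ Lambda) : ∃ s, Reach u s := by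
  have h : ∀ (γ : SL2), γ ∈ Γ → ∀ v₀ : ℝ × ℝ, (∃ s, Reach v₀ s) →
      ∃ s, Reach (act (γ : Matrix (Fin 2) (Fin 2) ℝ) v₀) s := by
    intro γ hγ v₀ hv₀
    exact (gamma_le_K hγ v₀ hv₀).1
  rcases hu with ((⟨γ, hγ, rfl⟩ | ⟨γ, hγ, rfl⟩) | ⟨γ, hγ, rfl⟩) | ⟨γ, hγ, rfl⟩
  · exact h γ hγ _ ⟨0, Reach.base1⟩
  · exact h γ hγ _ ⟨0, Reach.base2⟩
  · exact h γ hγ _ ⟨0, Reach.base3⟩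
  · exact h γ hγ _ ⟨0, Reach.base4⟩


/-! ### Invariant regions -/

/-- `x`-coordinate is 0 or at least 1 in absolute value. -/
def Bc (x y : ℝ) : Prop := x = 0 ∨ 1 ≤ |x|

/-- The same for `x - (2+√2) y`. -/
def Dc (x y : ℝ) : Prop := x = (2 + Real.sqrt 2) * y ∨ 1 ≤ |x - (2 + Real.sqrt 2) * y|

/-- Axis vectors of length at least one. -/
def A0 (x y : ℝ) : Prop := (y = 0 ∧ 1 ≤ |x|) ∨ (x = 0 ∧ 1 ≤ |y|)

/-- Vectors in the closed cone 0 ≤ x/y ≤ 2+√2 with the standard conditions. -/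
def QR (x y : ℝ) : Prop :=
  1 ≤ |y| ∧ 0 ≤ x * (x - (2 + Real.sqrt 2) * y) ∧ Bc x y ∧ Dc x y

def QS (x y : ℝ) : Prop :=
  1 ≤ |y| ∧ 0 ≤ x * ((2 + Real.sqrt 2) * y - x) ∧ Bc x y ∧ Dc x y

def VSp (x y : ℝ) : Prop :=
  1 ≤ |y| ∧ 0 ≤ (x - (2 + Real.sqrt 2) * y) * y ∧ Bc x y ∧ Dc x y

def VSm (x y : ℝ) : Prop := 1 ≤ |y| ∧ x * y ≤ 0 ∧ Bc x y

def VS1 (x y : ℝ) : Prop :=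
  1 ≤ |y| ∧ (x - 2*y) * (x - (2 + Real.sqrt 2) * y) ≤ 0 ∧ 1 ≤ |x| ∧ Dc x y ∧
    1 + Real.sqrt 2 ≤ |x - y| ∧ (x = 2*y ∨ Real.sqrt 2 - 1 ≤ |x - 2*y|)

def VS2 (x y : ℝ) : Prop :=
  1 ≤ |y| ∧ (x - Real.sqrt 2 * y) * (x - 2*y) ≤ 0 ∧ 1 ≤ |x| ∧ Dc x y ∧
    1 ≤ |x - y| ∧ (x = Real.sqrt 2 * y ∨ Real.sqrt 2 - 1 ≤ |x - Real.sqrt 2 * y|)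

def VS3 (x y : ℝ) : Prop :=
  1 ≤ |y| ∧ x * (x - Real.sqrt 2 * y) ≤ 0 ∧ Bc x y ∧ Dc x y

def Ray1 (x y : ℝ) : Prop := ∃ c, 1 ≤ |c| ∧ x = c * (1 + Real.sqrt 2) ∧ y = c

def Ray2 (x y : ℝ) : Prop := ∃ c, 1 ≤ |c| ∧ x = c * (1 + Real.sqrt 2) ∧ y = c * Real.sqrt 2

def Ray3 (x y : ℝ) : Prop := ∃ c, 1 ≤ |c| ∧ x = c ∧ y = c

/-- The invariant attached to each state. -/
def InvS : ℕ → ℝ × ℝ → Prop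
  | 0, v => A0 v.1 v.2
  | 1, v => VS1 v.1 v.2 ∨ Ray1 v.1 v.2
  | 2, v => VS2 v.1 v.2 ∨ Ray2 v.1 v.2
  | 3, v => VS3 v.1 v.2 ∨ Ray3 v.1 v.2
  | 4, v => VSp v.1 v.2 ∨ A0 v.1 v.2
  | 5, v => VSm v.1 v.2 ∨ A0 v.1 v.2
  | _, _ => True

/-! ### Symmetry of the regions under negation -/

lemma Bc_neg {x y : ℝ} (h : Bc x y) : Bc (-x) (-y) := by
  rcases h with h | h
  · exact Or.inl (by rw [h, neg_zero])
  · exact Or.inr (by rwa [abs_neg])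

lemma Dc_neg {x y : ℝ} (h : Dc x y) : Dc (-x) (-y) := by
  rcases h with h | h
  · exact Or.inl (by rw [h]; ring)
  · refine Or.inr ?_
    rwa [show -x - (2 + Real.sqrt 2) * -y = -(x - (2 + Real.sqrt 2) * y) by ring, abs_neg]

lemma A0_neg {x y : ℝ} (h : A0 x y) : A0 (-x) (-y) := by
  rcases h with ⟨h1, h2⟩ | ⟨h1, h2⟩
  · exact Or.inl ⟨by rw [h1, neg_zero], by rwa [abs_neg]⟩
  · exact Or.inr ⟨by rw [h1, neg_zero], by rwa [abs_neg]⟩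

lemma VSp_neg {x y : ℝ} (h : VSp x y) : VSp (-x) (-y) := by
  obtain ⟨h1, h2, h3, h4⟩ := h
  exact ⟨by rwa [abs_neg], by nlinarith [h2], Bc_neg h3, Dc_neg h4⟩

lemma VSm_neg {x y : ℝ} (h : VSm x y) : VSm (-x) (-y) := by
  obtain ⟨h1, h2, h3⟩ := h
  exact ⟨by rwa [abs_neg], by nlinarith [h2], Bc_neg h3⟩

lemma VS1_neg {x y : ℝ} (h : VS1 x y) : VS1 (-x) (-y) := by
  obtain ⟨h1, h2, h3, h4, h5, h6⟩ := h
  refine ⟨by rwa [abs_neg], by nlinarith [h2], by rwa [abs_neg], Dc_neg h4, ?_, ?_⟩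
  · rwa [show -x - -y = -(x - y) by ring, abs_neg]
  · rcases h6 with h6 | h6
    · exact Or.inl (by rw [h6]; ring)
    · exact Or.inr (by rwa [show -x - 2 * -y = -(x - 2*y) by ring, abs_neg])

lemma VS2_neg {x y : ℝ} (h : VS2 x y) : VS2 (-x) (-y) := by
  obtain ⟨h1, h2, h3, h4, h5, h6⟩ := h
  refine ⟨by rwa [abs_neg], by nlinarith [h2], by rwa [abs_neg], Dc_neg h4, ?_, ?_⟩
  · rwa [show -x - -y = -(x - y) by ring, abs_neg]
  · rcases h6 with h6 | h6
    · exact Or.inl (by rw [h6]; ring)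
    · exact Or.inr
        (by rwa [show -x - Real.sqrt 2 * -y = -(x - Real.sqrt 2 * y) by ring, abs_neg])

lemma VS3_neg {x y : ℝ} (h : VS3 x y) : VS3 (-x) (-y) := by
  obtain ⟨h1, h2, h3, h4⟩ := h
  exact ⟨by rwa [abs_neg], by nlinarith [h2], Bc_neg h3, Dc_neg h4⟩

lemma Ray1_neg {x y : ℝ} (h : Ray1 x y) : Ray1 (-x) (-y) := by
  obtain ⟨c, hc, hx, hy⟩ := h
  exact ⟨-c, by rwa [abs_neg], by rw [hx]; ring, by rw [hy]⟩

lemma Ray2_neg {x y : ℝ} (h : Ray2 x y) : Ray2 (-x) (-y) := by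
  obtain ⟨c, hc, hx, hy⟩ := h
  exact ⟨-c, by rwa [abs_neg], by rw [hx]; ring, by rw [hy]; ring⟩

lemma Ray3_neg {x y : ℝ} (h : Ray3 x y) : Ray3 (-x) (-y) := by
  obtain ⟨c, hc, hx, hy⟩ := h
  exact ⟨-c, by rwa [abs_neg], by rw [hx], by rw [hy]⟩

lemma InvS_neg {s : ℕ} {v : ℝ × ℝ} (h : InvS s v) : InvS s (-v) := by
  have e1 : (-v).1 = -v.1 := rfl
  have e2 : (-v).2 = -v.2 := rfl
  match s with
  | 0 =>
    simp only [InvS] at h ⊢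
    rw [e1, e2]; exact A0_neg h
  | 1 =>
    simp only [InvS] at h ⊢
    rw [e1, e2]
    rcases h with h | h
    exacts [Or.inl (VS1_neg h), Or.inr (Ray1_neg h)]
  | 2 =>
    simp only [InvS] at h ⊢
    rw [e1, e2]
    rcases h with h | h
    exacts [Or.inl (VS2_neg h), Or.inr (Ray2_neg h)]
  | 3 =>
    simp only [InvS] at h ⊢
    rw [e1, e2]
    rcases h with h | h
    exacts [Or.inl (VS3_neg h), Or.inr (Ray3_neg h)]
  | 4 =>
    simp only [InvS] at h ⊢
    rw [e1, e2]
    rcases h with h | h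
    exacts [Or.inl (VSp_neg h), Or.inr (A0_neg h)]
  | 5 =>
    simp only [InvS] at h ⊢
    rw [e1, e2]
    rcases h with h | h
    exacts [Or.inl (VSm_neg h), Or.inr (A0_neg h)]
  | (n+6) => trivial


/-! ### Analytic transition lemmas -/

lemma lem_tr {x y : ℝ} (h : QR x y) :
    VS1 ((1 + Real.sqrt 2) * x - (2 + Real.sqrt 2) * y) (x - y) := by
  obtain ⟨hy, hc, hB, hD⟩ := h
  have hg := sq2_gt
  have hl := sq2_lt
  refine ⟨?_, ?_, ?_, ?_, ?_, ?_⟩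
  · -- 1 ≤ |x - y|
    rcases mul_nonneg_iff.mp hc with ⟨h1, h2⟩ | ⟨h1, h2⟩ <;>
      rcases le_abs.mp hy with hy1 | hy1 <;> rw [le_abs]
    · left
      have k1 : 0 ≤ (1 + Real.sqrt 2) * (y - 1) := by
        apply mul_nonneg <;> linarith
      nlinarith [h2, k1]
    · left; linarith
    · right; linarith
    · right
      have k1 : 0 ≤ (1 + Real.sqrt 2) * (-y - 1) := by
        apply mul_nonneg <;> linarith
      nlinarith [h2, k1]
  · -- subcone
    have id2 : ((1 + Real.sqrt 2) * x - (2 + Real.sqrt 2) * y - 2 * (x - y)) *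
        ((1 + Real.sqrt 2) * x - (2 + Real.sqrt 2) * y - (2 + Real.sqrt 2) * (x - y))
        = -((Real.sqrt 2 - 1) * (x * (x - (2 + Real.sqrt 2) * y))) := by
      linear_combination (-(x*y)) * sq2_sq
    rw [id2]
    have := mul_nonneg (by linarith : (0:ℝ) ≤ Real.sqrt 2 - 1) hc
    linarith
  · -- 1 ≤ |X|
    rcases mul_nonneg_iff.mp hc with ⟨h1, h2⟩ | ⟨h1, h2⟩ <;>
      rcases le_abs.mp hy with hy1 | hy1 <;> rw [le_abs]
    · left
      have k1 : 0 ≤ (1 + Real.sqrt 2) * (x - (2 + Real.sqrt 2) * y) :=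
        mul_nonneg (by linarith) h2
      nlinarith [k1, hy1, sq2_sq]
    · left
      have k1 : 0 ≤ (1 + Real.sqrt 2) * x := mul_nonneg (by linarith) h1
      nlinarith [k1, hy1]
    · right
      have k1 : 0 ≤ (1 + Real.sqrt 2) * (-x) := mul_nonneg (by linarith) (by linarith)
      nlinarith [k1, hy1]
    · right
      have k1 : 0 ≤ (1 + Real.sqrt 2) * ((2 + Real.sqrt 2) * y - x) :=
        mul_nonneg (by linarith) (by linarith)
      nlinarith [k1, hy1, sq2_sq]
  · -- Dc
    rcases hB with hB | hB
    · left; rw [hB]; ring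
    · right
      rw [show (1 + Real.sqrt 2) * x - (2 + Real.sqrt 2) * y - (2 + Real.sqrt 2) * (x - y)
          = -x by ring, abs_neg]
      exact hB
  · -- E1 : 1 + √2 ≤ |X - Y|
    rcases mul_nonneg_iff.mp hc with ⟨h1, h2⟩ | ⟨h1, h2⟩ <;>
      rcases le_abs.mp hy with hy1 | hy1 <;> rw [le_abs]
    · left
      have k1 : 0 ≤ Real.sqrt 2 * (x - (2 + Real.sqrt 2) * y) :=
        mul_nonneg (by linarith) h2
      have k2 : 0 ≤ (1 + Real.sqrt 2) * (y - 1) := mul_nonneg (by linarith) (by linarith)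
      nlinarith [k1, k2, sq2_sq]
    · left
      have k1 : 0 ≤ Real.sqrt 2 * x := mul_nonneg (by linarith) h1
      have k2 : 0 ≤ (1 + Real.sqrt 2) * (-y - 1) := mul_nonneg (by linarith) (by linarith)
      nlinarith [k1, k2]
    · right
      have k1 : 0 ≤ Real.sqrt 2 * (-x) := mul_nonneg (by linarith) (by linarith)
      have k2 : 0 ≤ (1 + Real.sqrt 2) * (y - 1) := mul_nonneg (by linarith) (by linarith)
      nlinarith [k1, k2]
    · right
      have k1 : 0 ≤ Real.sqrt 2 * ((2 + Real.sqrt 2) * y - x) :=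
        mul_nonneg (by linarith) (by linarith)
      have k2 : 0 ≤ (1 + Real.sqrt 2) * (-y - 1) := mul_nonneg (by linarith) (by linarith)
      nlinarith [k1, k2, sq2_sq]
  · -- F1
    rcases hD with hD | hD
    · left; rw [hD]; linear_combination y * sq2_sq
    · right
      rw [show (1 + Real.sqrt 2) * x - (2 + Real.sqrt 2) * y - 2 * (x - y)
          = (Real.sqrt 2 - 1) * (x - (2 + Real.sqrt 2) * y) by linear_combination y * sq2_sq,
        abs_mul, abs_of_pos (by linarith : (0:ℝ) < Real.sqrt 2 - 1)]
      nlinarith [hD, hg]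

lemma lem_trr {x y : ℝ} (h : VS1 x y) :
    VS2 ((1 + Real.sqrt 2) * x - (2 + Real.sqrt 2) * y) (x - y) := by
  obtain ⟨hy, hsub, hB, hD, hE, hF⟩ := h
  have hg := sq2_gt
  have hl := sq2_lt
  -- sign structure
  have hsgn : (1 ≤ y ∧ 2*y ≤ x ∧ x ≤ (2 + Real.sqrt 2) * y) ∨
      (1 ≤ -y ∧ x ≤ 2*y ∧ (2 + Real.sqrt 2) * y ≤ x) := by
    rcases le_abs.mp hy with hy1 | hy1
    · left
      have hsy : 0 < Real.sqrt 2 * y := mul_pos (by linarith) (by linarith)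
      refine ⟨hy1, ?_, ?_⟩
      · by_contra hcon
        push_neg at hcon
        have hk := mul_pos (show (0:ℝ) < 2*y - x by linarith)
          (show (0:ℝ) < (2 + Real.sqrt 2)*y - x by linarith)
        nlinarith [hsub, hk]
      · by_contra hcon
        push_neg at hcon
        have hk := mul_pos (show (0:ℝ) < x - (2 + Real.sqrt 2)*y by linarith)
          (show (0:ℝ) < x - 2*y by linarith)
        nlinarith [hsub, hk]
    · right
      have hsy : 0 < Real.sqrt 2 * (-y) := mul_pos (by linarith) (by linarith)
      refine ⟨hy1, ?_, ?_⟩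
      · by_contra hcon
        push_neg at hcon
        have hk := mul_pos (show (0:ℝ) < x - 2*y by linarith)
          (show (0:ℝ) < x - (2 + Real.sqrt 2)*y by nlinarith)
        nlinarith [hsub, hk]
      · by_contra hcon
        push_neg at hcon
        have hk := mul_pos (show (0:ℝ) < (2 + Real.sqrt 2)*y - x by nlinarith)
          (show (0:ℝ) < 2*y - x by linarith)
        nlinarith [hsub, hk]
  refine ⟨?_, ?_, ?_, ?_, ?_, ?_⟩
  · -- 1 ≤ |x - y| from E1
    rcases le_abs.mp hE with hE1 | hE1 <;> rw [le_abs]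
    · left; linarith
    · right; linarith
  · -- subcone [√2, 2]
    have id2 : ((1 + Real.sqrt 2) * x - (2 + Real.sqrt 2) * y - Real.sqrt 2 * (x - y)) *
        ((1 + Real.sqrt 2) * x - (2 + Real.sqrt 2) * y - 2 * (x - y))
        = (Real.sqrt 2 - 1) * ((x - 2*y) * (x - (2 + Real.sqrt 2) * y)) := by
      linear_combination (x*y - 2*y*y) * sq2_sq
    rw [id2]
    have := mul_nonpos_of_nonneg_of_nonpos (by linarith : (0:ℝ) ≤ Real.sqrt 2 - 1) hsub
    linarith
  · -- 1 ≤ |X|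
    rcases hsgn with ⟨hy1, ha, hb⟩ | ⟨hy1, ha, hb⟩ <;> rw [le_abs]
    · left
      have k1 : 0 ≤ (1 + Real.sqrt 2) * (x - 2*y) := mul_nonneg (by linarith) (by linarith)
      nlinarith [k1, hy1]
    · right
      have k1 : 0 ≤ (1 + Real.sqrt 2) * (2*y - x) := mul_nonneg (by linarith) (by linarith)
      nlinarith [k1, hy1]
  · -- Dc
    right
    rw [show (1 + Real.sqrt 2) * x - (2 + Real.sqrt 2) * y - (2 + Real.sqrt 2) * (x - y)
        = -x by ring, abs_neg]
    exact hB
  · -- E2 : 1 ≤ |X - Y|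
    rcases hsgn with ⟨hy1, ha, hb⟩ | ⟨hy1, ha, hb⟩ <;> rw [le_abs]
    · left
      have hEpos : 1 + Real.sqrt 2 ≤ x - y := by
        rcases le_abs.mp hE with h' | h'
        · linarith
        · nlinarith [hy1]
      have k1 : 0 ≤ (Real.sqrt 2 - 1) * (x - y - (1 + Real.sqrt 2)) :=
        mul_nonneg (by linarith) (by linarith)
      nlinarith [k1, sq2_sq, ha]
    · right
      have hEneg : x - y ≤ -(1 + Real.sqrt 2) := by
        rcases le_abs.mp hE with h' | h'
        · nlinarith [hy1]
        · linarith
      have k1 : 0 ≤ (Real.sqrt 2 - 1) * (-(x - y) - (1 + Real.sqrt 2)) :=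
        mul_nonneg (by linarith) (by linarith)
      nlinarith [k1, sq2_sq, ha]
  · -- F2
    rcases hF with hF | hF
    · left; rw [hF]; ring
    · right
      rw [show (1 + Real.sqrt 2) * x - (2 + Real.sqrt 2) * y - Real.sqrt 2 * (x - y)
          = x - 2*y by ring]
      exact hF

lemma lem_trrr {x y : ℝ} (h : VS2 x y) :
    VS3 ((1 + Real.sqrt 2) * x - (2 + Real.sqrt 2) * y) (x - y) := by
  obtain ⟨hy, hsub, hB, hD, hE, hF⟩ := h
  have hg := sq2_gt
  have hl := sq2_lt
  refine ⟨?_, ?_, ?_, ?_⟩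
  · -- 1 ≤ |x - y|
    rcases le_abs.mp hE with hE1 | hE1 <;> rw [le_abs]
    · left; linarith
    · right; linarith
  · -- subcone [0, √2]
    have id2 : ((1 + Real.sqrt 2) * x - (2 + Real.sqrt 2) * y) *
        ((1 + Real.sqrt 2) * x - (2 + Real.sqrt 2) * y - Real.sqrt 2 * (x - y))
        = (1 + Real.sqrt 2) * ((x - Real.sqrt 2 * y) * (x - 2*y)) := by
      linear_combination (x*y - 2*y*y) * sq2_sq
    rw [id2]
    have := mul_nonpos_of_nonneg_of_nonpos (by linarith : (0:ℝ) ≤ 1 + Real.sqrt 2) hsub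
    linarith
  · -- Bc
    rcases hF with hF | hF
    · left; rw [hF]; linear_combination y * sq2_sq
    · right
      rw [show (1 + Real.sqrt 2) * x - (2 + Real.sqrt 2) * y
          = (1 + Real.sqrt 2) * (x - Real.sqrt 2 * y) by linear_combination y * sq2_sq,
        abs_mul, abs_of_pos (by linarith : (0:ℝ) < 1 + Real.sqrt 2)]
      have hk := mul_le_mul_of_nonneg_left hF (by linarith : (0:ℝ) ≤ 1 + Real.sqrt 2)
      nlinarith [hk, sq2_sq]
  · -- Dc
    right
    rw [show (1 + Real.sqrt 2) * x - (2 + Real.sqrt 2) * y - (2 + Real.sqrt 2) * (x - y)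
        = -x by ring, abs_neg]
    exact hB


lemma lem_sp {x y : ℝ} (h : QS x y) : VSp (x + (2 + Real.sqrt 2) * y) y := by
  obtain ⟨hy, hc, hB, hD⟩ := h
  have hg := sq2_gt
  have hDc : Dc (x + (2 + Real.sqrt 2) * y) y := by
    rcases hB with hB | hB
    · left; rw [hB]; ring
    · right
      rw [show x + (2 + Real.sqrt 2) * y - (2 + Real.sqrt 2) * y = x by ring]
      exact hB
  rcases le_abs.mp hy with hy1 | hy1
  · have hx : 0 ≤ x ∧ x ≤ (2 + Real.sqrt 2) * y := by
      rcases mul_nonneg_iff.mp hc with ⟨ha, hb⟩ | ⟨ha, hb⟩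
      · exact ⟨ha, by linarith⟩
      · constructor <;> nlinarith [ha, hb, hy1]
    refine ⟨hy, by nlinarith [hx.1, hy1], Or.inr ?_, hDc⟩
    rw [le_abs]; left; nlinarith [hx.1, hy1]
  · have hx : x ≤ 0 ∧ (2 + Real.sqrt 2) * y ≤ x := by
      rcases mul_nonneg_iff.mp hc with ⟨ha, hb⟩ | ⟨ha, hb⟩
      · constructor <;> nlinarith [ha, hb, hy1]
      · exact ⟨ha, by linarith⟩
    refine ⟨hy, by nlinarith [hx.1, hy1], Or.inr ?_, hDc⟩
    rw [le_abs]; right; nlinarith [hx.1, hy1]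

lemma lem_sm {x y : ℝ} (h : QS x y) : VSm (x - (2 + Real.sqrt 2) * y) y := by
  obtain ⟨hy, hc, hB, hD⟩ := h
  have hg := sq2_gt
  have hBc : Bc (x - (2 + Real.sqrt 2) * y) y := by
    rcases hD with hD | hD
    · left; rw [hD]; ring
    · right; exact hD
  rcases le_abs.mp hy with hy1 | hy1
  · have hx : 0 ≤ x ∧ x ≤ (2 + Real.sqrt 2) * y := by
      rcases mul_nonneg_iff.mp hc with ⟨ha, hb⟩ | ⟨ha, hb⟩
      · exact ⟨ha, by linarith⟩
      · constructor <;> nlinarith [ha, hb, hy1]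
    exact ⟨hy, by nlinarith [hx.2, hy1], hBc⟩
  · have hx : x ≤ 0 ∧ (2 + Real.sqrt 2) * y ≤ x := by
      rcases mul_nonneg_iff.mp hc with ⟨ha, hb⟩ | ⟨ha, hb⟩
      · constructor <;> nlinarith [ha, hb, hy1]
      · exact ⟨ha, by linarith⟩
    exact ⟨hy, by nlinarith [hx.2, hy1], hBc⟩

lemma lem_spext {x y : ℝ} (h : VSp x y) : VSp (x + (2 + Real.sqrt 2) * y) y := by
  obtain ⟨hy, hc, hB, hD⟩ := h
  have hg := sq2_gt
  have hDc : Dc (x + (2 + Real.sqrt 2) * y) y := by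
    rcases hB with hB | hB
    · left; rw [hB]; ring
    · right
      rw [show x + (2 + Real.sqrt 2) * y - (2 + Real.sqrt 2) * y = x by ring]
      exact hB
  rcases le_abs.mp hy with hy1 | hy1
  · have hx : (2 + Real.sqrt 2) * y ≤ x := by
      rcases mul_nonneg_iff.mp hc with ⟨ha, hb⟩ | ⟨ha, hb⟩
      · linarith
      · nlinarith [ha, hb, hy1]
    have hxp : 0 < x := by
      nlinarith [hx, mul_pos (show (0:ℝ) < 2 + Real.sqrt 2 by linarith)
        (show (0:ℝ) < y by linarith)]
    have hcone : 0 ≤ (x + (2 + Real.sqrt 2) * y - (2 + Real.sqrt 2) * y) * y := by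
      nlinarith [mul_nonneg hxp.le (show (0:ℝ) ≤ y by linarith)]
    refine ⟨hy, hcone, Or.inr ?_, hDc⟩
    rw [le_abs]; left
    nlinarith [hx, mul_pos (show (0:ℝ) < 2 + Real.sqrt 2 by linarith)
      (show (0:ℝ) < y by linarith)]
  · have hx : x ≤ (2 + Real.sqrt 2) * y := by
      rcases mul_nonneg_iff.mp hc with ⟨ha, hb⟩ | ⟨ha, hb⟩
      · nlinarith [ha, hb, hy1]
      · linarith
    have hxn : x < 0 := by
      nlinarith [hx, mul_pos (show (0:ℝ) < 2 + Real.sqrt 2 by linarith)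
        (show (0:ℝ) < -y by linarith)]
    have hcone : 0 ≤ (x + (2 + Real.sqrt 2) * y - (2 + Real.sqrt 2) * y) * y := by
      nlinarith [mul_nonneg (show (0:ℝ) ≤ -x by linarith) (show (0:ℝ) ≤ -y by linarith)]
    refine ⟨hy, hcone, Or.inr ?_, hDc⟩
    rw [le_abs]; right
    nlinarith [hx, mul_pos (show (0:ℝ) < 2 + Real.sqrt 2 by linarith)
      (show (0:ℝ) < -y by linarith)]

lemma lem_smext {x y : ℝ} (h : VSm x y) : VSm (x - (2 + Real.sqrt 2) * y) y := by
  obtain ⟨hy, hc, hB⟩ := h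
  have hg := sq2_gt
  rcases le_abs.mp hy with hy1 | hy1
  · have hx : x ≤ 0 := by
      by_contra hcon
      push_neg at hcon
      nlinarith [mul_pos hcon (show (0:ℝ) < y by linarith)]
    have hcone : (x - (2 + Real.sqrt 2) * y) * y ≤ 0 := by
      nlinarith [mul_nonneg (show (0:ℝ) ≤ -x by linarith) (show (0:ℝ) ≤ y by linarith),
        mul_pos (show (0:ℝ) < 2 + Real.sqrt 2 by linarith)
          (mul_pos (show (0:ℝ) < y by linarith) (show (0:ℝ) < y by linarith))]
    refine ⟨hy, hcone, Or.inr ?_⟩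
    rw [le_abs]; right
    nlinarith [hx, mul_pos (show (0:ℝ) < 2 + Real.sqrt 2 by linarith)
      (show (0:ℝ) < y by linarith)]
  · have hx : 0 ≤ x := by
      by_contra hcon
      push_neg at hcon
      nlinarith [mul_pos (show (0:ℝ) < -x by linarith) (show (0:ℝ) < -y by linarith)]
    have hcone : (x - (2 + Real.sqrt 2) * y) * y ≤ 0 := by
      nlinarith [mul_nonneg (show (0:ℝ) ≤ x by linarith) (show (0:ℝ) ≤ -y by linarith),
        mul_pos (show (0:ℝ) < 2 + Real.sqrt 2 by linarith)
          (mul_pos (show (0:ℝ) < -y by linarith) (show (0:ℝ) < -y by linarith))]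
    refine ⟨hy, hcone, Or.inr ?_⟩
    rw [le_abs]; left
    nlinarith [hx, mul_pos (show (0:ℝ) < 2 + Real.sqrt 2 by linarith)
      (show (0:ℝ) < -y by linarith)]

/-! ### Reductions to the two standard cones -/

lemma red_vsp_qr {x y : ℝ} (h : VSp x y) : QR x y := by
  obtain ⟨hy, hc, hB, hD⟩ := h
  have hg := sq2_gt
  refine ⟨hy, ?_, hB, hD⟩
  rcases le_abs.mp hy with hy1 | hy1
  · have hx : (2 + Real.sqrt 2) * y ≤ x := by
      rcases mul_nonneg_iff.mp hc with ⟨ha, hb⟩ | ⟨ha, hb⟩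
      · linarith
      · nlinarith [ha, hb, hy1]
    nlinarith [hx, hy1]
  · have hx : x ≤ (2 + Real.sqrt 2) * y := by
      rcases mul_nonneg_iff.mp hc with ⟨ha, hb⟩ | ⟨ha, hb⟩
      · nlinarith [ha, hb, hy1]
      · linarith
    nlinarith [hx, hy1]

lemma red_vsm_qr {x y : ℝ} (h : VSm x y) : QR x y := by
  obtain ⟨hy, hc, hB⟩ := h
  have hg := sq2_gt
  refine ⟨hy, by nlinarith [sq_nonneg x, hc], hB, Or.inr ?_⟩
  rcases le_abs.mp hy with hy1 | hy1
  · have hx : x ≤ 0 := by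
      by_contra hcon
      push_neg at hcon
      nlinarith [mul_pos hcon (show (0:ℝ) < y by linarith)]
    rw [le_abs]; right; nlinarith [hx, hy1]
  · have hx : 0 ≤ x := by
      by_contra hcon
      push_neg at hcon
      nlinarith [mul_pos (show (0:ℝ) < -x by linarith) (show (0:ℝ) < -y by linarith)]
    rw [le_abs]; left; nlinarith [hx, hy1]

lemma vs1_sgn {x y : ℝ} (hy : 1 ≤ |y|)
    (hsub : (x - 2*y) * (x - (2 + Real.sqrt 2) * y) ≤ 0) :
    (1 ≤ y ∧ 2*y ≤ x ∧ x ≤ (2 + Real.sqrt 2) * y) ∨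
      (1 ≤ -y ∧ x ≤ 2*y ∧ (2 + Real.sqrt 2) * y ≤ x) := by
  have hg := sq2_gt
  rcases le_abs.mp hy with hy1 | hy1
  · left
    have hsy : 0 < Real.sqrt 2 * y := mul_pos (by linarith) (by linarith)
    refine ⟨hy1, ?_, ?_⟩
    · by_contra hcon
      push_neg at hcon
      have hk := mul_pos (show (0:ℝ) < 2*y - x by linarith)
        (show (0:ℝ) < (2 + Real.sqrt 2)*y - x by linarith)
      nlinarith [hsub, hk]
    · by_contra hcon
      push_neg at hcon
      have hk := mul_pos (show (0:ℝ) < x - (2 + Real.sqrt 2)*y by linarith)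
        (show (0:ℝ) < x - 2*y by linarith)
      nlinarith [hsub, hk]
  · right
    have hsy : 0 < Real.sqrt 2 * (-y) := mul_pos (by linarith) (by linarith)
    refine ⟨hy1, ?_, ?_⟩
    · by_contra hcon
      push_neg at hcon
      have hk := mul_pos (show (0:ℝ) < x - 2*y by linarith)
        (show (0:ℝ) < x - (2 + Real.sqrt 2)*y by nlinarith)
      nlinarith [hsub, hk]
    · by_contra hcon
      push_neg at hcon
      have hk := mul_pos (show (0:ℝ) < (2 + Real.sqrt 2)*y - x by nlinarith)
        (show (0:ℝ) < 2*y - x by linarith)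
      nlinarith [hsub, hk]

lemma vs2_sgn {x y : ℝ} (hy : 1 ≤ |y|)
    (hsub : (x - Real.sqrt 2 * y) * (x - 2*y) ≤ 0) :
    (1 ≤ y ∧ Real.sqrt 2 * y ≤ x ∧ x ≤ 2 * y) ∨
      (1 ≤ -y ∧ x ≤ Real.sqrt 2 * y ∧ 2 * y ≤ x) := by
  have hg := sq2_gt
  rcases le_abs.mp hy with hy1 | hy1
  · left
    have hsy : 0 < (2 - Real.sqrt 2) * y :=
      mul_pos (by nlinarith [sq2_lt]) (by linarith)
    refine ⟨hy1, ?_, ?_⟩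
    · by_contra hcon
      push_neg at hcon
      have hk := mul_pos (show (0:ℝ) < Real.sqrt 2 * y - x by linarith)
        (show (0:ℝ) < 2*y - x by nlinarith)
      nlinarith [hsub, hk]
    · by_contra hcon
      push_neg at hcon
      have hk := mul_pos (show (0:ℝ) < x - Real.sqrt 2 * y by nlinarith)
        (show (0:ℝ) < x - 2*y by linarith)
      nlinarith [hsub, hk]
  · right
    have hsy : 0 < (2 - Real.sqrt 2) * (-y) :=
      mul_pos (by nlinarith [sq2_lt]) (by linarith)
    refine ⟨hy1, ?_, ?_⟩
    · by_contra hcon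
      push_neg at hcon
      have hk := mul_pos (show (0:ℝ) < x - Real.sqrt 2 * y by linarith)
        (show (0:ℝ) < x - 2*y by nlinarith)
      nlinarith [hsub, hk]
    · by_contra hcon
      push_neg at hcon
      have hk := mul_pos (show (0:ℝ) < Real.sqrt 2 * y - x by nlinarith)
        (show (0:ℝ) < 2*y - x by linarith)
      nlinarith [hsub, hk]

lemma vs3_sgn {x y : ℝ} (hy : 1 ≤ |y|)
    (hsub : x * (x - Real.sqrt 2 * y) ≤ 0) :
    (1 ≤ y ∧ 0 ≤ x ∧ x ≤ Real.sqrt 2 * y) ∨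
      (1 ≤ -y ∧ x ≤ 0 ∧ Real.sqrt 2 * y ≤ x) := by
  have hg := sq2_gt
  rcases le_abs.mp hy with hy1 | hy1
  · left
    have hsy : 0 < Real.sqrt 2 * y := mul_pos (by linarith) (by linarith)
    refine ⟨hy1, ?_, ?_⟩
    · by_contra hcon
      push_neg at hcon
      have hk := mul_pos (show (0:ℝ) < -x by linarith)
        (show (0:ℝ) < Real.sqrt 2 * y - x by linarith)
      nlinarith [hsub, hk]
    · by_contra hcon
      push_neg at hcon
      have hk := mul_pos (show (0:ℝ) < x by linarith)
        (show (0:ℝ) < x - Real.sqrt 2 * y by linarith)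
      nlinarith [hsub, hk]
  · right
    have hsy : 0 < Real.sqrt 2 * (-y) := mul_pos (by linarith) (by linarith)
    refine ⟨hy1, ?_, ?_⟩
    · by_contra hcon
      push_neg at hcon
      have hk := mul_pos (show (0:ℝ) < x by linarith)
        (show (0:ℝ) < x - Real.sqrt 2 * y by linarith)
      nlinarith [hsub, hk]
    · by_contra hcon
      push_neg at hcon
      have hk := mul_pos (show (0:ℝ) < -x by linarith)
        (show (0:ℝ) < Real.sqrt 2 * y - x by linarith)
      nlinarith [hsub, hk]

lemma red_vs1_qs {x y : ℝ} (h : VS1 x y) : QS x y := by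
  obtain ⟨hy, hsub, hB, hD, _, _⟩ := h
  have hg := sq2_gt
  refine ⟨hy, ?_, Or.inr hB, hD⟩
  rcases vs1_sgn hy hsub with ⟨hy1, ha, hb⟩ | ⟨hy1, ha, hb⟩
  · exact mul_nonneg (by linarith) (by linarith)
  · exact mul_nonneg_iff.mpr (Or.inr ⟨by linarith, by linarith⟩)

lemma red_vs2_qs {x y : ℝ} (h : VS2 x y) : QS x y := by
  obtain ⟨hy, hsub, hB, hD, _, _⟩ := h
  have hg := sq2_gt
  refine ⟨hy, ?_, Or.inr hB, hD⟩
  rcases vs2_sgn hy hsub with ⟨hy1, ha, hb⟩ | ⟨hy1, ha, hb⟩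
  · have h1 : 0 < Real.sqrt 2 * y := mul_pos (by linarith) (by linarith)
    exact mul_nonneg (by linarith) (by linarith)
  · have h1 : 0 < Real.sqrt 2 * (-y) := mul_pos (by linarith) (by linarith)
    exact mul_nonneg_iff.mpr (Or.inr ⟨by linarith, by linarith⟩)

lemma red_vs3_qs {x y : ℝ} (h : VS3 x y) : QS x y := by
  obtain ⟨hy, hsub, hB, hD⟩ := h
  have hg := sq2_gt
  refine ⟨hy, ?_, hB, hD⟩
  rcases vs3_sgn hy hsub with ⟨hy1, ha, hb⟩ | ⟨hy1, ha, hb⟩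
  · have h1 : 0 < Real.sqrt 2 * y := mul_pos (by linarith) (by linarith)
    exact mul_nonneg (by linarith) (by nlinarith [sq2_lt])
  · have h1 : 0 < Real.sqrt 2 * (-y) := mul_pos (by linarith) (by linarith)
    exact mul_nonneg_iff.mpr (Or.inr ⟨by linarith, by nlinarith [sq2_lt]⟩)

lemma red_ray1_qs {x y : ℝ} (h : Ray1 x y) : QS x y := by
  obtain ⟨c, hc, hxe, hye⟩ := h
  rw [hxe, hye]
  have hg := sq2_gt
  have hc0 : 1 ≤ c * c := by
    rcases le_abs.mp hc with h1 | h1 <;> nlinarith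
  refine ⟨hc, by nlinarith [hc0], Or.inr ?_, Or.inr ?_⟩
  · rw [abs_mul, abs_of_pos (show (0:ℝ) < 1 + Real.sqrt 2 by linarith)]
    nlinarith [hc, abs_nonneg c]
  · rw [show c * (1 + Real.sqrt 2) - (2 + Real.sqrt 2) * c = -c by ring, abs_neg]
    exact hc

lemma red_ray2_qs {x y : ℝ} (h : Ray2 x y) : QS x y := by
  obtain ⟨c, hc, hxe, hye⟩ := h
  rw [hxe, hye]
  have hg := sq2_gt
  have hc0 : 1 ≤ c * c := by
    rcases le_abs.mp hc with h1 | h1 <;> nlinarith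
  refine ⟨?_, ?_, Or.inr ?_, Or.inr ?_⟩
  · rw [abs_mul, abs_of_pos (show (0:ℝ) < Real.sqrt 2 by linarith)]
    nlinarith [hc, abs_nonneg c]
  · have hid : c * (1 + Real.sqrt 2) * ((2 + Real.sqrt 2) * (c * Real.sqrt 2)
        - c * (1 + Real.sqrt 2)) = (1 + Real.sqrt 2) * (1 + Real.sqrt 2) * (c * c) := by
      linear_combination (c*c*(1 + Real.sqrt 2)) * sq2_sq
    rw [hid]
    positivity
  · rw [abs_mul, abs_of_pos (show (0:ℝ) < 1 + Real.sqrt 2 by linarith)]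
    nlinarith [hc, abs_nonneg c]
  · rw [show c * (1 + Real.sqrt 2) - (2 + Real.sqrt 2) * (c * Real.sqrt 2)
        = -(c * (1 + Real.sqrt 2)) from by linear_combination (-c) * sq2_sq,
      abs_neg, abs_mul, abs_of_pos (show (0:ℝ) < 1 + Real.sqrt 2 by linarith)]
    nlinarith [hc, abs_nonneg c]

lemma red_ray3_qs {x y : ℝ} (h : Ray3 x y) : QS x y := by
  obtain ⟨c, hc, hxe, hye⟩ := h
  rw [hxe, hye]
  have hg := sq2_gt
  have hc0 : 1 ≤ c * c := by
    rcases le_abs.mp hc with h1 | h1 <;> nlinarith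
  refine ⟨hc, by nlinarith [hc0], Or.inr hc, Or.inr ?_⟩
  rw [show c - (2 + Real.sqrt 2) * c = -((1 + Real.sqrt 2) * c) by ring, abs_neg,
    abs_mul, abs_of_pos (show (0:ℝ) < 1 + Real.sqrt 2 by linarith)]
  nlinarith [hc, abs_nonneg c]

lemma red_a0v_qr {x y : ℝ} (hx : x = 0) (hy : 1 ≤ |y|) : QR x y := by
  subst hx
  have hg := sq2_gt
  refine ⟨hy, by nlinarith, Or.inl rfl, Or.inr ?_⟩
  rw [show (0:ℝ) - (2 + Real.sqrt 2) * y = -((2 + Real.sqrt 2) * y) by ring, abs_neg,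
    abs_mul, abs_of_pos (show (0:ℝ) < 2 + Real.sqrt 2 by linarith)]
  nlinarith [hy, abs_nonneg y]

lemma red_a0v_qs {x y : ℝ} (hx : x = 0) (hy : 1 ≤ |y|) : QS x y := by
  subst hx
  have hg := sq2_gt
  refine ⟨hy, by nlinarith, Or.inl rfl, Or.inr ?_⟩
  rw [show (0:ℝ) - (2 + Real.sqrt 2) * y = -((2 + Real.sqrt 2) * y) by ring, abs_neg,
    abs_mul, abs_of_pos (show (0:ℝ) < 2 + Real.sqrt 2 by linarith)]
  nlinarith [hy, abs_nonneg y]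

/-! ### Ray transitions under R -/

lemma ray1_step {x y : ℝ} (h : Ray1 x y) :
    Ray2 ((1 + Real.sqrt 2) * x - (2 + Real.sqrt 2) * y) (x - y) := by
  obtain ⟨c, hc, hxe, hye⟩ := h
  exact ⟨c, hc, by rw [hxe, hye]; linear_combination c * sq2_sq, by rw [hxe, hye]; ring⟩

lemma ray2_step {x y : ℝ} (h : Ray2 x y) :
    Ray3 ((1 + Real.sqrt 2) * x - (2 + Real.sqrt 2) * y) (x - y) := by
  obtain ⟨c, hc, hxe, hye⟩ := h
  rw [hxe, hye]
  refine ⟨c, hc, by ring, by ring⟩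

lemma a0h_step {x y : ℝ} (hy : y = 0) (hx : 1 ≤ |x|) :
    Ray1 ((1 + Real.sqrt 2) * x - (2 + Real.sqrt 2) * y) (x - y) := by
  subst hy
  exact ⟨x, hx, by ring, by ring⟩


/-! ### The master invariant -/

lemma reach_invariant {u : ℝ × ℝ} {s : ℕ} (h : Reach u s) : InvS s u := by
  induction h with
  | base1 =>
    exact Or.inl ⟨rfl, by norm_num⟩
  | base2 =>
    refine Or.inl ⟨rfl, ?_⟩
    show (1:ℝ) ≤ |(1 + Real.sqrt 2 : ℝ)|
    have := sq2_gt
    rw [abs_of_pos (by linarith)]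
    linarith
  | base3 =>
    exact Or.inr ⟨rfl, by norm_num⟩
  | base4 =>
    refine Or.inr ⟨rfl, ?_⟩
    show (1:ℝ) ≤ |(Real.sqrt 2 : ℝ)|
    have := sq2_gt
    rw [abs_of_pos (by linarith)]
    linarith
  | neg h ih => exact InvS_neg ih
  | rstep h hs ih =>
    rename_i u' s'
    have key : ∀ w : ℝ × ℝ, InvS 0 w ∨ InvS 4 w ∨ InvS 5 w → InvS 1 (aR w) := by
      rintro w hw
      have ha0 : A0 w.1 w.2 → InvS 1 (aR w) := by
        rintro (⟨h1, h2⟩ | ⟨h1, h2⟩)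
        · exact Or.inr (a0h_step h1 h2)
        · exact Or.inl (lem_tr (red_a0v_qr h1 h2))
      rcases hw with hw | hw | hw
      · exact ha0 hw
      · rcases hw with hw | hw
        · exact Or.inl (lem_tr (red_vsp_qr hw))
        · exact ha0 hw
      · rcases hw with hw | hw
        · exact Or.inl (lem_tr (red_vsm_qr hw))
        · exact ha0 hw
    rcases hs with rfl | rfl | rfl
    · exact key u' (Or.inl ih)
    · exact key u' (Or.inr (Or.inl ih))
    · exact key u' (Or.inr (Or.inr ih))
  | rstep2 h ih =>
    rcases ih with h1 | h1
    · exact Or.inl (lem_trr h1)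
    · exact Or.inr (ray1_step h1)
  | rstep3 h ih =>
    rcases ih with h1 | h1
    · exact Or.inl (lem_trrr h1)
    · exact Or.inr (ray2_step h1)
  | sstep h hs ih =>
    rename_i u' s'
    have ha0 : A0 u'.1 u'.2 → InvS 4 (aS u') := by
      rintro (⟨h1, h2⟩ | ⟨h1, h2⟩)
      · refine Or.inr (Or.inl ⟨h1, ?_⟩)
        rw [show (aS u').1 = u'.1 + (2 + Real.sqrt 2) * u'.2 from rfl, h1]
        rw [show u'.1 + (2 + Real.sqrt 2) * 0 = u'.1 by ring]
        exact h2
      · exact Or.inl (lem_sp (red_a0v_qs h1 h2))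
    interval_cases s'
    · exact ha0 ih
    · rcases ih with h1 | h1
      · exact Or.inl (lem_sp (red_vs1_qs h1))
      · exact Or.inl (lem_sp (red_ray1_qs h1))
    · rcases ih with h1 | h1
      · exact Or.inl (lem_sp (red_vs2_qs h1))
      · exact Or.inl (lem_sp (red_ray2_qs h1))
    · rcases ih with h1 | h1
      · exact Or.inl (lem_sp (red_vs3_qs h1))
      · exact Or.inl (lem_sp (red_ray3_qs h1))
  | sstepext h ih =>
    rename_i u'
    rcases ih with h1 | h1
    · exact Or.inl (lem_spext h1)
    · rcases h1 with ⟨h1, h2⟩ | ⟨h1, h2⟩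
      · refine Or.inr (Or.inl ⟨h1, ?_⟩)
        rw [show (aS u').1 = u'.1 + (2 + Real.sqrt 2) * u'.2 from rfl, h1]
        rw [show u'.1 + (2 + Real.sqrt 2) * 0 = u'.1 by ring]
        exact h2
      · exact Or.inl (lem_sp (red_a0v_qs h1 h2))
  | tstep h hs ih =>
    rename_i u' s'
    have ha0 : A0 u'.1 u'.2 → InvS 5 (aSi u') := by
      rintro (⟨h1, h2⟩ | ⟨h1, h2⟩)
      · refine Or.inr (Or.inl ⟨h1, ?_⟩)
        rw [show (aSi u').1 = u'.1 - (2 + Real.sqrt 2) * u'.2 from rfl, h1]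
        rw [show u'.1 - (2 + Real.sqrt 2) * 0 = u'.1 by ring]
        exact h2
      · exact Or.inl (lem_sm (red_a0v_qs h1 h2))
    interval_cases s'
    · exact ha0 ih
    · rcases ih with h1 | h1
      · exact Or.inl (lem_sm (red_vs1_qs h1))
      · exact Or.inl (lem_sm (red_ray1_qs h1))
    · rcases ih with h1 | h1
      · exact Or.inl (lem_sm (red_vs2_qs h1))
      · exact Or.inl (lem_sm (red_ray2_qs h1))
    · rcases ih with h1 | h1
      · exact Or.inl (lem_sm (red_vs3_qs h1))
      · exact Or.inl (lem_sm (red_ray3_qs h1))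
  | tstepext h ih =>
    rename_i u'
    rcases ih with h1 | h1
    · exact Or.inl (lem_smext h1)
    · rcases h1 with ⟨h1, h2⟩ | ⟨h1, h2⟩
      · refine Or.inr (Or.inl ⟨h1, ?_⟩)
        rw [show (aSi u').1 = u'.1 - (2 + Real.sqrt 2) * u'.2 from rfl, h1]
        rw [show u'.1 - (2 + Real.sqrt 2) * 0 = u'.1 by ring]
        exact h2
      · exact Or.inl (lem_sm (red_a0v_qs h1 h2))

/-- The key geometric fact: reachable vectors in the open second quadrant have both
coordinates of absolute value at least 1. -/
lemma good_of_reach {u : ℝ × ℝ} {s : ℕ} (h : Reach u s)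
    (hx : u.1 < 0) (hy : 0 < u.2) : u.1 ≤ -1 ∧ 1 ≤ u.2 := by
  have hi := reach_invariant h
  have h5 := reach_le5 h
  have hg := sq2_gt
  have ha0 : ¬ A0 u.1 u.2 := by
    rintro (⟨h1, _⟩ | ⟨h1, _⟩) <;> linarith
  interval_cases s
  · exact absurd hi ha0
  · exfalso
    rcases hi with ⟨_, hsub, _⟩ | ⟨c, hc, hxe, hye⟩
    · have hk := mul_pos (show (0:ℝ) < 2*u.2 - u.1 by linarith)
        (show (0:ℝ) < (2 + Real.sqrt 2)*u.2 - u.1 by nlinarith)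
      nlinarith [hsub, hk]
    · nlinarith [hxe, hye]
  · exfalso
    rcases hi with ⟨_, hsub, _⟩ | ⟨c, hc, hxe, hye⟩
    · have hk := mul_pos (show (0:ℝ) < Real.sqrt 2 * u.2 - u.1 by nlinarith)
        (show (0:ℝ) < 2*u.2 - u.1 by linarith)
      nlinarith [hsub, hk]
    · nlinarith [hxe, hye]
  · exfalso
    rcases hi with ⟨_, hsub, _⟩ | ⟨c, hc, hxe, hye⟩
    · have hk := mul_pos (show (0:ℝ) < -u.1 by linarith)
        (show (0:ℝ) < Real.sqrt 2 * u.2 - u.1 by nlinarith)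
      nlinarith [hsub, hk]
    · nlinarith [hxe, hye]
  · exfalso
    rcases hi with ⟨_, hc, _⟩ | ha
    · have hk := mul_pos (show (0:ℝ) < (2 + Real.sqrt 2) * u.2 - u.1 by
        nlinarith [mul_pos (show (0:ℝ) < 2 + Real.sqrt 2 by linarith) hy]) hy
      nlinarith [hc, hk]
    · exact ha0 ha
  · rcases hi with ⟨hy1, _, hB⟩ | ha
    · constructor
      · rcases hB with hB | hB
        · linarith
        · rcases le_abs.mp hB with h1 | h1 <;> linarith
      · rcases le_abs.mp hy1 with h1 | h1 <;> linarith
    · exact absurd ha ha0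

lemma lambda_good {u : ℝ × ℝ} (hu : u ∈ Lambda)
    (hx : u.1 < 0) (hy : 0 < u.2) : u.1 ≤ -1 ∧ 1 ≤ u.2 := by
  obtain ⟨s, hs⟩ := lambda_reach hu
  exact good_of_reach hs hx hy

/-! ### Membership computations for the main theorem -/

lemma neg_one_zero_mem_Lambda : ((-1 : ℝ), (0 : ℝ)) ∈ Lambda := by
  have hRmem : (Rgen : SL2) ∈ Γ := Subgroup.subset_closure (Set.mem_insert _ _)
  have hmem : (Rgen ^ 4 : SL2) ∈ Γ := pow_mem hRmem 4
  left; left; left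
  refine ⟨Rgen ^ 4, hmem, ?_⟩
  have hco : ((Rgen ^ 4 : SL2) : Matrix (Fin 2) (Fin 2) ℝ)
      = ((Rgen : SL2) : Matrix (Fin 2) (Fin 2) ℝ) ^ 4 := by
    simp [pow_succ]
  rw [hco]
  have hact : ∀ v : ℝ × ℝ,
      act (((Rgen : SL2) : Matrix (Fin 2) (Fin 2) ℝ) ^ 4) v = aR (aR (aR (aR v))) := by
    intro v
    rw [show (((Rgen : SL2) : Matrix (Fin 2) (Fin 2) ℝ)) ^ 4
        = ((↑Rgen * ↑Rgen) * ↑Rgen) * (↑Rgen : Matrix (Fin 2) (Fin 2) ℝ) by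
        rw [pow_succ, pow_succ, pow_succ, pow_one],
      act_mul, act_mul, act_mul, act_Rgen, act_Rgen, act_Rgen, act_Rgen]
  rw [hact, aR4]
  norm_num

lemma act_MRot (a b : ℝ) (u : ℝ × ℝ) :
    act (Mmat a b * Rot) u = (a * u.2 - b * u.1, -(a⁻¹ * u.1)) := by
  rw [act_mul]
  show act (Mmat a b) (act Rot u) = _
  have h1 : act Rot u = (u.2, -u.1) := by
    simp [act, Rot, Prod.ext_iff]
  rw [h1]
  simp [act, Mmat, Prod.ext_iff]
  constructor <;> ring


lemma act_MRot_1 (a b : ℝ) (u : ℝ × ℝ) :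
    (act (Mmat a b * Rot) u).1 = a * u.2 - b * u.1 := by
  rw [act_MRot]

lemma act_MRot_2 (a b : ℝ) (u : ℝ × ℝ) :
    (act (Mmat a b * Rot) u).2 = -(a⁻¹ * u.1) := by
  rw [act_MRot]

/-- On the region Ω₂ (0 < a ≤ 1, 1 − a < b ≤ 1), the set of positive slopes of vectors of
M_{a,b}·Rot·Λ in the vertical strip (0,1] × (0,∞) has least element 1/(ab): the return time of
the horocycle flow on the part Ω₂ of the Poincaré section. -/
theorem return_time_Omega2 (a b : ℝ) (ha0 : 0 < a) (ha1 : a ≤ 1)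
    (hb0 : 1 - a < b) (hb1 : b ≤ 1) :
    IsLeast
      {s | ∃ u ∈ Lambda, 0 < (act (Mmat a b * Rot) u).1 ∧ (act (Mmat a b * Rot) u).1 ≤ 1 ∧
        0 < (act (Mmat a b * Rot) u).2 ∧
        s = (act (Mmat a b * Rot) u).2 / (act (Mmat a b * Rot) u).1}
      (1 / (a * b)) := by
  have hb0' : 0 < b := by linarith
  have hab : 0 < a * b := mul_pos ha0 hb0'
  have hainv : 0 < a⁻¹ := inv_pos.mpr ha0
  constructor
  · -- 1/(ab) is attained, by the holonomy vector (-1,0) ∈ Λ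
    refine ⟨((-1 : ℝ), (0 : ℝ)), neg_one_zero_mem_Lambda, ?_, ?_, ?_, ?_⟩
    · rw [act_MRot_1]; norm_num; linarith
    · rw [act_MRot_1]; norm_num; linarith
    · rw [act_MRot_2]; norm_num; exact ha0
    · rw [act_MRot_1, act_MRot_2]
      norm_num
      rw [eq_div_iff (by linarith : b ≠ 0)]
      field_simp
  · -- lower bound
    rintro t ⟨u, hu, h1, h2, h3, rfl⟩
    rw [act_MRot_1] at h1 h2
    rw [act_MRot_2] at h3
    rw [act_MRot_1, act_MRot_2]
    have hu1 : u.1 < 0 := by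
      by_contra hcon
      push_neg at hcon
      nlinarith [mul_nonneg hainv.le hcon, h3]
    by_cases hu2 : 0 < u.2
    · exfalso
      obtain ⟨hA, hB⟩ := lambda_good hu hu1 hu2
      have k1 : a * 1 ≤ a * u.2 := mul_le_mul_of_nonneg_left hB ha0.le
      have k2 : b * 1 ≤ b * (-u.1) := mul_le_mul_of_nonneg_left (by linarith) hb0'.le
      nlinarith [h2, k1, k2]
    · push_neg at hu2
      rw [div_le_div_iff₀ hab h1, one_mul]
      have hsub : -(a⁻¹ * u.1) * (a * b) = -(b * u.1) := by
        field_simp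
      rw [hsub]
      nlinarith [mul_nonneg ha0.le (neg_nonneg.mpr hu2), h2]

end
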